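/- Let G be a finite group, H ≤ G, and [H,K] the bottom interval of [H,G] (K being the join of all atoms of [H,G]). If there is an irreducible complex representation W of K with K_{(W^H)} = H, then there is an irreducible complex representation V of G with G_{(V^H)} = H. -/

import Mathlib

/-- The fixed-point subspace `V^H` of a representation. -/
def Representation.fixedBy {G V : Type*} [Group G] [AddCommGroup V] [Module ℂ V]
    (ρ : Representation ℂ G V) (H : Subgroup G) : Submodule ℂ V where
  carrier := {v : V | ∀ h ∈ H, ρ h v = v}
  zero_mem' := by intro h _; simp
  add_mem' := by
    intro a b ha hb h hh
    simp [map_add, ha h hh, hb h hh]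
  smul_mem' := by
    intro c a ha h hh
    simp [map_smul, ha h hh]

/-- The pointwise stabilizer `G_{(X)}` of a set of vectors. -/
def Representation.pointwiseStabilizer {G V : Type*} [Group G] [AddCommGroup V] [Module ℂ V]
    (ρ : Representation ℂ G V) (X : Set V) : Subgroup G where
  carrier := {g : G | ∀ x ∈ X, ρ g x = x}
  one_mem' := by intro x _; simp
  mul_mem' := by
    intro a b ha hb x hx
    simp [map_mul, Module.End.mul_apply, hb x hx, ha x hx]
  inv_mem' := by
    intro a ha x hx
    have h1 : ρ a⁻¹ (ρ a x) = x := by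
      rw [← Module.End.mul_apply, ← map_mul, inv_mul_cancel, map_one, Module.End.one_apply]
    calc ρ a⁻¹ x = ρ a⁻¹ (ρ a x) := by rw [ha x hx]
    _ = x := h1


open CategoryTheory
namespace LinPrimAux
variable {Γ : Type} [Group Γ]

noncomputable def subRep (X : FDRep ℂ Γ) (U : Submodule ℂ X) (hU : ∀ (g : Γ), ∀ x ∈ U, X.ρ g x ∈ U) :
    Representation ℂ Γ U where
  toFun g := (X.ρ g).restrict (hU g)
  map_one' := by ext x; simp [LinearMap.restrict_apply]
  map_mul' g h := by ext x; simp [LinearMap.restrict_apply]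

noncomputable def incl (X : FDRep ℂ Γ) (U : Submodule ℂ X)
    (hU : ∀ (g : Γ), ∀ x ∈ U, X.ρ g x ∈ U) :
    FDRep.of (subRep X U hU) ⟶ X where
  hom := FGModuleCat.ofHom U.subtype
  comm := fun _ => rfl

lemma simple_exists_ne_zero (X : FDRep ℂ Γ) [Simple X] : ∃ x : X, x ≠ 0 := by
  by_contra h
  push_neg at h
  have : (𝟙 X : X ⟶ X) = 0 := by
    apply Action.hom_ext
    apply FGModuleCat.hom_ext
    apply LinearMap.ext
    intro x
    simpa using h x
  exact CategoryTheory.id_nonzero X this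

lemma simple_eq_bot_or_top (X : FDRep ℂ Γ) [Simple X] (U : Submodule ℂ X)
    (hU : ∀ (g : Γ), ∀ x ∈ U, X.ρ g x ∈ U) : U = ⊥ ∨ U = ⊤ := by
  rcases eq_or_ne U ⊥ with h | h
  · exact Or.inl h
  right
  obtain ⟨u, hu, hune⟩ := Submodule.exists_mem_ne_zero_of_ne_bot h
  have hmono : Mono (incl X U hU) := by
    constructor
    intro Z f g hfg
    have h1 : f.hom ≫ (incl X U hU).hom = g.hom ≫ (incl X U hU).hom := by
      rw [← Action.comp_hom, ← Action.comp_hom, hfg]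
    apply Action.hom_ext
    apply FGModuleCat.hom_ext
    apply LinearMap.ext
    intro z
    have h2 : U.subtype (f.hom z) = U.subtype (g.hom z) := DFunLike.congr_fun (congrArg (fun φ => φ.hom.hom) h1) z
    exact Subtype.val_injective h2
  have hne : incl X U hU ≠ 0 := by
    intro h0
    apply hune
    have h1 : (incl X U hU).hom = 0 := by rw [h0]; rfl
    have : (⟨u, hu⟩ : U).1 = (0 : X.V) := DFunLike.congr_fun (congrArg (fun φ => φ.hom.hom) h1) (⟨u, hu⟩ : U)
    simpa using this
  have : IsIso (incl X U hU) := (Simple.mono_isIso_iff_nonzero _).mpr hne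
  rw [Submodule.eq_top_iff']
  intro x
  have hid : (inv (incl X U hU) ≫ incl X U hU) = 𝟙 X := IsIso.inv_hom_id _
  have h1 : (inv (incl X U hU)).hom ≫ (incl X U hU).hom = 𝟙 X.V := by
    rw [← Action.comp_hom, hid]; rfl
  have h2 : U.subtype ((inv (incl X U hU)).hom x) = x := DFunLike.congr_fun (congrArg (fun φ => φ.hom.hom) h1) x
  rw [← h2]
  exact ((inv (incl X U hU)).hom x).2

lemma simple_of (X : FDRep ℂ Γ) (h1 : ∃ x : X, x ≠ 0)
    (h2 : ∀ U : Submodule ℂ X, (∀ (g : Γ), ∀ x ∈ U, X.ρ g x ∈ U) → U = ⊥ ∨ U = ⊤) :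
    Simple X := by
  constructor
  intro Y f hf
  constructor
  · intro hiso h0
    obtain ⟨x, hx⟩ := h1
    apply hx
    have hid : (inv f ≫ f) = 𝟙 X := IsIso.inv_hom_id _
    have h3 : (inv f).hom ≫ f.hom = 𝟙 X.V := by rw [← Action.comp_hom, hid]; rfl
    have h4 := DFunLike.congr_fun (congrArg (fun φ => φ.hom.hom) h3) x
    have h5 : f.hom = 0 := by rw [h0]; rfl
    rw [h5] at h4
    simpa using h4.symm
  · intro hne
    -- kernel is an invariant subspace of Y : it is ⊥
    have hker : ∀ y : Y.V, f.hom y = 0 → y = 0 := by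
      intro y hy
      -- the kernel subrep inclusion composed with f is zero
      set N : Submodule ℂ Y := LinearMap.ker f.hom.hom.hom with hN
      have hNinv : ∀ (g : Γ), ∀ x ∈ N, Y.ρ g x ∈ N := by
        intro g x hx
        have hc : Action.ρ Y g ≫ f.hom = f.hom ≫ Action.ρ X g := f.comm g
        have := DFunLike.congr_fun (congrArg (fun φ => φ.hom.hom) hc) x
        have hfx : f.hom x = 0 := hx
        simp only [LinearMap.mem_ker] at *
        calc f.hom (Y.ρ g x) = X.ρ g (f.hom x) := this
        _ = 0 := by rw [hfx]; simp
      have hcomp : incl Y N hNinv ≫ f = 0 := by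
        apply Action.hom_ext
        rw [Action.comp_hom, Action.zero_hom]
        apply FGModuleCat.hom_ext
        apply LinearMap.ext
        intro n
        have hn : f.hom (N.subtype n) = 0 := n.2
        exact hn
      have hz : incl Y N hNinv = 0 := by
        apply (cancel_mono f).1
        rw [hcomp, Limits.zero_comp]
      have : (⟨y, hy⟩ : N) = 0 → y = 0 := fun h => by
        simpa using congrArg (Subtype.val) h
      apply this
      have : (⟨y, hy⟩ : N).1 = (0 : N).1 := DFunLike.congr_fun (congrArg (fun φ => φ.hom.hom.hom) hz) (⟨y, hy⟩ : N)
      exact Subtype.val_injective (by simpa using this)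
    -- f.hom is injective and surjective
    have hinj : Function.Injective f.hom := by
      intro a b hab
      have : f.hom (a - b) = 0 := by simp [map_sub, hab]
      have := hker _ this
      rwa [sub_eq_zero] at this
    have hsurj : Function.Surjective f.hom := by
      have hR : LinearMap.range f.hom.hom.hom = ⊤ := by
        have hinv : ∀ (g : Γ), ∀ x ∈ LinearMap.range f.hom.hom.hom, (X.ρ g) x ∈ LinearMap.range f.hom.hom.hom := by
          intro g x hx
          obtain ⟨y, rfl⟩ := hx
          have hc : Action.ρ Y g ≫ f.hom = f.hom ≫ Action.ρ X g := f.comm g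
          have := DFunLike.congr_fun (congrArg (fun φ => φ.hom.hom) hc) y
          exact ⟨Y.ρ g y, this⟩
        rcases h2 (LinearMap.range f.hom.hom.hom) hinv with h | h
        · exfalso
          apply hne
          apply Action.hom_ext
          rw [Action.zero_hom]
          apply FGModuleCat.hom_ext
          apply LinearMap.ext
          intro y
          have hy : f.hom.hom.hom y ∈ LinearMap.range f.hom.hom.hom := ⟨y, rfl⟩
          rw [h] at hy
          simpa using hy
        · exact h
      intro x
      have : x ∈ LinearMap.range f.hom.hom.hom := hR ▸ Submodule.mem_top
      exact this
    -- build inverse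
    set e := LinearEquiv.ofBijective f.hom.hom.hom ⟨hinj, hsurj⟩ with he
    refine ⟨⟨⟨(ConcreteCategory.ofHom e.symm.toLinearMap : X.V ⟶ Y.V), fun g => ?_⟩, ?_, ?_⟩⟩
    · apply FGModuleCat.hom_ext
      apply LinearMap.ext
      intro x
      apply hinj
      have hc : Action.ρ Y g ≫ f.hom = f.hom ≫ Action.ρ X g := f.comm g
      have h5 := DFunLike.congr_fun (congrArg (fun φ => φ.hom.hom) hc) (e.symm x)
      have h6 : f.hom (e.symm x) = x := e.apply_symm_apply x
      show f.hom (e.symm ((X.ρ g) x)) = f.hom ((Y.ρ g) (e.symm x))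
      have h7 : f.hom (e.symm ((X.ρ g) x)) = (X.ρ g) x := e.apply_symm_apply _
      have h8 : f.hom ((Y.ρ g) (e.symm x)) = (X.ρ g) (f.hom (e.symm x)) := h5
      rw [h7, h8, h6]
    · apply Action.hom_ext
      apply FGModuleCat.hom_ext
      apply LinearMap.ext
      intro y
      show e.symm (f.hom y) = y
      exact e.symm_apply_apply y
    · apply Action.hom_ext
      apply FGModuleCat.hom_ext
      apply LinearMap.ext
      intro x
      show f.hom (e.symm x) = x
      exact e.apply_symm_apply x

open MonoidAlgebra

lemma isSimpleModule_asModule {Γ : Type} [Group Γ] (W : FDRep ℂ Γ) [Simple W] :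
    IsSimpleModule (MonoidAlgebra ℂ Γ) (Representation.asModule W.ρ) := by
  obtain ⟨w0, hw0⟩ := simple_exists_ne_zero W
  haveI : Nontrivial (Representation.asModule W.ρ) := by
    refine ⟨(Representation.asModuleEquiv W.ρ).symm w0, 0, ?_⟩
    intro h
    exact hw0 (by simpa using congrArg (Representation.asModuleEquiv W.ρ) h)
  refine { toIsSimpleOrder := { eq_bot_or_eq_top := ?_ } }
  intro p
  classical
  let U : Submodule ℂ W :=
    { carrier := (Representation.asModuleEquiv W.ρ) '' (p : Set (Representation.asModule W.ρ))
      zero_mem' := ⟨0, p.zero_mem, map_zero _⟩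
      add_mem' := by
        rintro a b ⟨x, hx, rfl⟩ ⟨y, hy, rfl⟩
        exact ⟨x + y, p.add_mem hx hy, map_add _ _ _⟩
      smul_mem' := by
        rintro c a ⟨x, hx, rfl⟩
        refine ⟨algebraMap ℂ (MonoidAlgebra ℂ Γ) c • x, p.smul_mem _ hx, ?_⟩
        have := Representation.asModuleEquiv_symm_map_smul W.ρ c ((Representation.asModuleEquiv W.ρ) x)
        rw [(Representation.asModuleEquiv W.ρ).symm_apply_apply] at this
        apply_fun (Representation.asModuleEquiv W.ρ) at this
        rw [(Representation.asModuleEquiv W.ρ).apply_symm_apply] at this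
        exact this.symm }
  have hU : ∀ (g : Γ), ∀ x ∈ U, W.ρ g x ∈ U := by
    rintro g x ⟨y, hy, rfl⟩
    refine ⟨MonoidAlgebra.of ℂ Γ g • y, p.smul_mem _ hy, ?_⟩
    have := Representation.asModuleEquiv_symm_map_rho W.ρ g ((Representation.asModuleEquiv W.ρ) y)
    rw [(Representation.asModuleEquiv W.ρ).symm_apply_apply] at this
    apply_fun (Representation.asModuleEquiv W.ρ) at this
    rw [(Representation.asModuleEquiv W.ρ).apply_symm_apply] at this
    exact this.symm
  rcases simple_eq_bot_or_top W U hU with h | h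
  · left
    rw [Submodule.eq_bot_iff]
    intro x hx
    have : (Representation.asModuleEquiv W.ρ) x ∈ U := ⟨x, hx, rfl⟩
    rw [h] at this
    have h0 : (Representation.asModuleEquiv W.ρ) x = 0 := this
    simpa using congrArg (Representation.asModuleEquiv W.ρ).symm h0
  · right
    rw [Submodule.eq_top_iff']
    intro x
    have : (Representation.asModuleEquiv W.ρ) x ∈ U := by rw [h]; trivial
    obtain ⟨y, hy, hxy⟩ := this
    rwa [← (Representation.asModuleEquiv W.ρ).injective hxy]

lemma exists_injective_to_monoidAlgebra {Γ : Type} [Group Γ] [Fintype Γ]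
    (W : FDRep ℂ Γ) [Simple W] :
    ∃ j : (Representation.asModule W.ρ) →ₗ[MonoidAlgebra ℂ Γ] MonoidAlgebra ℂ Γ, Function.Injective j := by
  haveI : NeZero ((Fintype.card Γ : ℂ)) := ⟨Nat.cast_ne_zero.mpr Fintype.card_ne_zero⟩
  haveI := isSimpleModule_asModule W
  obtain ⟨w0, hw0⟩ := simple_exists_ne_zero W
  set B := MonoidAlgebra ℂ Γ
  set m : (Representation.asModule W.ρ) := (Representation.asModuleEquiv W.ρ).symm w0 with hmdef
  have hm : m ≠ 0 := by
    intro h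
    exact hw0 (by simpa [hmdef] using congrArg (Representation.asModuleEquiv W.ρ) h)
  have hsurj := IsSimpleModule.toSpanSingleton_surjective B (m := m) hm
  obtain ⟨C, hC⟩ := exists_isCompl (LinearMap.ker (LinearMap.toSpanSingleton B (Representation.asModule W.ρ) m))
  let e1 := (LinearMap.quotKerEquivOfSurjective _ hsurj).symm
  let e2 := Submodule.quotientEquivOfIsCompl _ C hC
  refine ⟨C.subtype ∘ₗ (e2.toLinearMap ∘ₗ e1.toLinearMap), ?_⟩
  intro a b hab
  apply e1.injective
  apply e2.injective
  apply Subtype.val_injective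
  exact hab

variable {G : Type} [Group G] [Fintype G]

/-- The representation of `G` on an `MonoidAlgebra ℂ G`-submodule of the monoid algebra,
by left multiplication. -/
noncomputable def regSubRep (p : Submodule (MonoidAlgebra ℂ G) (MonoidAlgebra ℂ G)) :
    Representation ℂ G ↥p where
  toFun g :=
    { toFun := fun v => ⟨MonoidAlgebra.of ℂ G g • (v : MonoidAlgebra ℂ G), p.smul_mem _ v.2⟩
      map_add' := by
        intro a b
        apply Subtype.ext
        simp [smul_add, mul_add]
      map_smul' := by
        intro c a
        apply Subtype.ext
        simp [smul_comm, mul_smul_comm] }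
  map_one' := by
    ext v
    simp
  map_mul' g h := by
    apply LinearMap.ext
    intro v
    apply Subtype.ext
    show (MonoidAlgebra.of ℂ G (g * h) : MonoidAlgebra ℂ G) • (v : MonoidAlgebra ℂ G)
      = (MonoidAlgebra.of ℂ G g : MonoidAlgebra ℂ G)
        • ((MonoidAlgebra.of ℂ G h : MonoidAlgebra ℂ G) • (v : MonoidAlgebra ℂ G))
    rw [map_mul, mul_smul]

lemma regSubRep_coe (p : Submodule (MonoidAlgebra ℂ G) (MonoidAlgebra ℂ G)) (g : G) (v : ↥p) :
    ((regSubRep p g v : ↥p) : MonoidAlgebra ℂ G)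
      = MonoidAlgebra.single g 1 * (v : MonoidAlgebra ℂ G) := rfl

noncomputable instance : FiniteDimensional ℂ (MonoidAlgebra ℂ G) :=
  Module.Finite.equiv (MonoidAlgebra.coeffLinearEquiv ℂ).symm

noncomputable instance (p : Submodule (MonoidAlgebra ℂ G) (MonoidAlgebra ℂ G)) :
    FiniteDimensional ℂ ↥p :=
  FiniteDimensional.of_injective ((p.subtype).restrictScalars ℂ) p.injective_subtype

lemma regSubRep_bot_or_top (p : Submodule (MonoidAlgebra ℂ G) (MonoidAlgebra ℂ G))
    [IsSimpleModule (MonoidAlgebra ℂ G) ↥p]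
    (U : Submodule ℂ ↥p) (hU : ∀ g : G, ∀ x ∈ U, (regSubRep p) g x ∈ U) : U = ⊥ ∨ U = ⊤ := by
  classical
  let q : Submodule (MonoidAlgebra ℂ G) ↥p :=
    { carrier := (U : Set ↥p)
      zero_mem' := U.zero_mem
      add_mem' := fun ha hb => U.add_mem ha hb
      smul_mem' := by
        intro a v hv
        have key : a • v = ∑ g ∈ a.coeff.support, a.coeff g • ((regSubRep p) g v) := by
          apply Subtype.ext
          push_cast
          simp_rw [regSubRep_coe]
          rw [smul_eq_mul]
          conv_lhs => rw [← MonoidAlgebra.sum_coeff_single a]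
          rw [Finsupp.sum, Finset.sum_mul]
          refine Finset.sum_congr rfl fun g _ => ?_
          rw [← smul_mul_assoc]
          congr 1
          rw [MonoidAlgebra.smul_single]
          simp
        rw [key]
        exact Submodule.sum_mem U fun g _ => U.smul_mem _ (hU g v hv) }
  rcases eq_bot_or_eq_top (α := Submodule (MonoidAlgebra ℂ G) ↥p) q with h | h
  · left
    rw [Submodule.eq_bot_iff]
    intro x hx
    have : x ∈ q := hx
    rw [h] at this
    simpa using this
  · right
    rw [Submodule.eq_top_iff']
    intro x
    have : x ∈ q := by rw [h]; trivial
    exact this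

lemma exists_embedding (K : Subgroup G) (W : FDRep ℂ ↥K) [Simple W] :
    ∃ (V : FDRep ℂ G) (φ : W →ₗ[ℂ] V), Simple V ∧ Function.Injective φ ∧
      ∀ (k : K) (w : W), φ (W.ρ k w) = V.ρ (k : G) (φ w) := by
  classical
  haveI : Fintype ↥K := Fintype.ofFinite _
  haveI : NeZero ((Fintype.card G : ℂ)) := ⟨Nat.cast_ne_zero.mpr Fintype.card_ne_zero⟩
  obtain ⟨j, hj⟩ := exists_injective_to_monoidAlgebra W
  set θ : MonoidAlgebra ℂ ↥K →ₐ[ℂ] MonoidAlgebra ℂ G :=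
    MonoidAlgebra.mapDomainAlgHom ℂ ℂ K.subtype with hθdef
  have hθ : Function.Injective θ :=
    MonoidAlgebra.mapDomain_injective (R := ℂ) Subtype.val_injective
  have hθsingle : ∀ (k : ↥K), θ (MonoidAlgebra.of ℂ ↥K k) = MonoidAlgebra.of ℂ G (k : G) := by
    intro k
    show MonoidAlgebra.mapDomain _ _ = _
    rw [MonoidAlgebra.of_apply, MonoidAlgebra.of_apply, MonoidAlgebra.mapDomain_single]
    rfl
  -- the K-equivariant embedding into the regular representation of G
  set e := Representation.asModuleEquiv W.ρ with hedef
  set ψ : W → MonoidAlgebra ℂ G := fun w => θ (j (e.symm w)) with hψdef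
  have hψinj : Function.Injective ψ := fun a b hab =>
    e.symm.injective (hj (hθ hab))
  have hψadd : ∀ a b, ψ (a + b) = ψ a + ψ b := by
    intro a b
    rw [hψdef]
    simp only [map_add]
  have hψsmul : ∀ (c : ℂ) (w : W), ψ (c • w) = c • ψ w := by
    intro c w
    rw [hψdef]
    simp only []
    rw [Representation.asModuleEquiv_symm_map_smul, map_smul]
    rw [algebraMap_smul]
    rw [map_smul]
  have hψequiv : ∀ (k : ↥K) (w : W),
      ψ (W.ρ k w) = MonoidAlgebra.of ℂ G (k : G) * ψ w := by
    intro k w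
    rw [hψdef]
    simp only []
    rw [Representation.asModuleEquiv_symm_map_rho, map_smul, smul_eq_mul, map_mul, hθsingle]
  -- semisimple decomposition of the regular representation
  obtain ⟨s, hindep, hsup, hsimp⟩ :=
    IsSemisimpleModule.exists_sSupIndep_sSup_simples_eq_top
      (MonoidAlgebra ℂ G) (MonoidAlgebra ℂ G)
  set pfam : s → Submodule (MonoidAlgebra ℂ G) (MonoidAlgebra ℂ G) := fun i => (i : _) with hpfam
  have hinternal : DirectSum.IsInternal pfam :=
    DirectSum.isInternal_submodule_of_iSupIndep_of_iSup_eq_top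
      ((sSupIndep_iff s).mp hindep) (by rw [← sSup_eq_iSup']; exact hsup)
  set eqv := LinearEquiv.ofBijective (DirectSum.coeLinearMap pfam) hinternal with heqv
  obtain ⟨w0, hw0⟩ := simple_exists_ne_zero W
  have hx0 : ψ w0 ≠ 0 := by
    intro h
    apply hw0
    have : ψ w0 = ψ 0 := by
      rw [h, hψdef]
      simp only []
      rw [map_zero, map_zero, map_zero]
    exact hψinj this
  have hexi : ∃ i : s, (eqv.symm (ψ w0)) i ≠ 0 := by
    by_contra h
    push_neg at h
    apply hx0
    have h0 : eqv.symm (ψ w0) = 0 := DFinsupp.ext h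
    have := congrArg eqv h0
    rw [eqv.apply_symm_apply, map_zero] at this
    exact this
  obtain ⟨i, hi⟩ := hexi
  set V0 := pfam i with hV0
  haveI hsimple0 : IsSimpleModule (MonoidAlgebra ℂ G) ↥V0 := hsimp i i.2
  set π : MonoidAlgebra ℂ G →ₗ[MonoidAlgebra ℂ G] ↥V0 :=
    (DirectSum.component (MonoidAlgebra ℂ G) s (fun i => ↥(pfam i)) i)
      ∘ₗ eqv.symm.toLinearMap with hπ
  have hπapply : ∀ x, π x = eqv.symm x i := fun x => rfl
  -- the ℂ-linear K-equivariant map φ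
  set φ : W →ₗ[ℂ] ↥V0 :=
    { toFun := fun w => π (ψ w)
      map_add' := by
        intro a b
        show π (ψ (a + b)) = π (ψ a) + π (ψ b)
        rw [hψadd, map_add]
      map_smul' := by
        intro c w
        show π (ψ (c • w)) = c • π (ψ w)
        rw [hψsmul, ← algebraMap_smul (MonoidAlgebra ℂ G) c (ψ w), map_smul, algebraMap_smul] } with hφ
  have hφequiv : ∀ (k : ↥K) (w : W), φ (W.ρ k w) = (regSubRep V0) (k : G) (φ w) := by
    intro k w
    show π (ψ (W.ρ k w)) = (regSubRep V0) (k : G) (π (ψ w))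
    rw [hψequiv]
    apply Subtype.ext
    rw [regSubRep_coe]
    have : MonoidAlgebra.of ℂ G (k : G) * ψ w = (MonoidAlgebra.of ℂ G (k : G)) • ψ w :=
      rfl
    rw [this, map_smul]
    rfl
  have hφw0 : φ w0 ≠ 0 := by
    intro h
    apply hi
    have : π (ψ w0) = 0 := h
    rw [hπapply] at this
    exact_mod_cast congrArg Subtype.val this
  -- φ is injective since its kernel is an invariant subspace of the simple W
  have hkerinv : ∀ (k : ↥K), ∀ w ∈ LinearMap.ker φ, W.ρ k w ∈ LinearMap.ker φ := by
    intro k w hw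
    rw [LinearMap.mem_ker] at hw ⊢
    rw [hφequiv, hw, map_zero]
  have hker : LinearMap.ker φ = ⊥ := by
    rcases simple_eq_bot_or_top W (LinearMap.ker φ) hkerinv with h | h
    · exact h
    · exfalso
      apply hφw0
      have : w0 ∈ LinearMap.ker φ := by rw [h]; trivial
      exact this
  have hφinj : Function.Injective φ := LinearMap.ker_eq_bot.mp hker
  -- assemble
  refine ⟨FDRep.of (regSubRep V0), φ, ?_, hφinj, ?_⟩
  · apply simple_of
    · haveI := IsSimpleModule.nontrivial (MonoidAlgebra ℂ G) ↥V0
      obtain ⟨a, b, hab⟩ := exists_pair_ne ↥V0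
      exact ⟨a - b, sub_ne_zero.mpr hab⟩
    · intro U hU
      exact regSubRep_bot_or_top V0 U hU
  · intro k w
    exact hφequiv k w

end LinPrimAux

/-- If `K` is the join of all atoms of the interval `[H,G]` (its bottom interval being
`[H,K]`) and there is an irreducible complex representation `W` of `K` with
`K_{(W^H)} = H`, then there is an irreducible complex representation `V` of `G` with
`G_{(V^H)} = H`. -/
theorem linearly_primitive_of_bottom_linearly_primitive
    (G : Type) [Group G] [Fintype G] (H K : Subgroup G)
    (hK : K = ⨆ A ∈ {A : Subgroup G | H ⋖ A}, A)
    (hbot : ∃ W : FDRep ℂ ↥K, CategoryTheory.Simple W ∧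
      Representation.pointwiseStabilizer W.ρ
        (Representation.fixedBy W.ρ (H.subgroupOf K) : Set W) = H.subgroupOf K) :
    ∃ V : FDRep ℂ G, CategoryTheory.Simple V ∧
      Representation.pointwiseStabilizer V.ρ
        (Representation.fixedBy V.ρ H : Set V) = H := by
  classical
  obtain ⟨W, hWsimple, hWstab⟩ := hbot
  haveI := hWsimple
  obtain ⟨V, φ, hVsimple, hφinj, hφequiv⟩ := LinPrimAux.exists_embedding K W
  refine ⟨V, hVsimple, ?_⟩
  apply le_antisymm
  · -- stabilizer ≤ H
    by_cases hHtop : H = ⊤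
    · rw [hHtop]; exact le_top
    have hHK : H ≤ K := by
      have hlt : H < ⊤ := lt_top_iff_ne_top.mpr hHtop
      obtain ⟨Aat, hcov, _⟩ := exists_covBy_le_of_lt hlt
      calc H ≤ Aat := hcov.le
      _ ≤ K := by
        rw [hK]
        exact le_biSup (fun A : Subgroup G => A) hcov
    -- the key fact : φ maps H-fixed vectors of W to H-fixed vectors of V
    have hφfix : ∀ w : W, (w : W) ∈ Representation.fixedBy W.ρ (H.subgroupOf K) →
        φ w ∈ Representation.fixedBy V.ρ H := by
      intro w hw h hh
      have hk : h ∈ K := hHK hh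
      have : V.ρ h (φ w) = φ (W.ρ (⟨h, hk⟩ : ↥K) w) := (hφequiv ⟨h, hk⟩ w).symm
      rw [this]
      congr 1
      exact hw ⟨h, hk⟩ hh
    by_contra hnle
    have hHle : H ≤ Representation.pointwiseStabilizer V.ρ
        (Representation.fixedBy V.ρ H : Set V) := by
      intro h hh x hx
      exact hx h hh
    have hlt : H < Representation.pointwiseStabilizer V.ρ
        (Representation.fixedBy V.ρ H : Set V) := by
      rcases lt_or_eq_of_le hHle with h | h
      · exact h
      · exact absurd h.symm.le hnle
    haveI : Finite (Subgroup G) :=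
      Finite.of_injective (fun S => (S : Set G)) SetLike.coe_injective
    obtain ⟨Aat, hcov, hAatle⟩ := exists_covBy_le_of_lt hlt
    have hAatK : Aat ≤ K := by
      rw [hK]
      exact le_biSup (fun A : Subgroup G => A) hcov
    have hAatH : Aat ≤ H := by
      intro a ha
      have haK : a ∈ K := hAatK ha
      have haL := hAatle ha
      have key : (⟨a, haK⟩ : ↥K) ∈ H.subgroupOf K := by
        rw [← hWstab]
        intro w hw
        have h1 : φ (W.ρ (⟨a, haK⟩ : ↥K) w) = V.ρ a (φ w) := hφequiv _ w
        have h2 : V.ρ a (φ w) = φ w := haL (φ w) (hφfix w hw)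
        have := h1.trans h2
        exact hφinj this
      exact key
    exact absurd hAatH hcov.lt.not_ge
  · intro h hh x hx
    exact hx h hh
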